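/- Suppose for every n and every i_n ∈ {1,...,m_n} one has p_{i_n,n} · p_{i_n−1,n} < 0, and that the limits lim_n Π_{k≤n} (p_{0,k}/q_{0,k}) and lim_n Π_{k≤n} (p_{m_k,k}/q_{m_k,k}) are not both 0. Then F has neither a finite nor an infinite derivative at any nega-Q̃-rational point of [0,1]. -/

import Mathlib

open Finset Filter Topology MeasureTheory

noncomputable section

/-- `rowSum p n k = Σ_{i<k} p_{i,n}` (the numbers `β_{k,n}`). -/
def rowSum (p : ℕ → ℕ → ℝ) (n k : ℕ) : ℝ := ∑ i ∈ Finset.range k, p n i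

/-- Index flip at even positions: `tw m f n i = f n i` for odd `n`, `f n (m n - i)` for even `n`. -/
def tw (m : ℕ → ℕ) (f : ℕ → ℕ → ℝ) (n i : ℕ) : ℝ :=
  if Odd n then f n i else f n (m n - i)

/-- Tail value of the (nega-)expansion determined by `f` from position `k+1` on. -/
def negaShift (m : ℕ → ℕ) (f : ℕ → ℕ → ℝ) (d : ℕ → ℕ) (k : ℕ) : ℝ :=
  ∑' j : ℕ, tw m (rowSum f) (k + j + 1) (d (k + j + 1)) *
    ∏ t ∈ Finset.Icc (k + 1) (k + j), tw m f t (d t)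

/-- The nega-expansion value: `negaVal m f d = β̃_{d₁,1} + Σ_{k≥2} β̃_{d_k,k} Π_{j<k} f̃_{d_j,j}`. -/
def negaVal (m : ℕ → ℕ) (f : ℕ → ℕ → ℝ) (d : ℕ → ℕ) : ℝ := negaShift m f d 0

/-- A digit sequence for the alphabet sizes `m`. -/
def ValidDigits (m : ℕ → ℕ) (d : ℕ → ℕ) : Prop := ∀ n, d n ≤ m n

namespace Stmt14Aux

/-- effective-digit flip -/
def effD (m d : ℕ → ℕ) (t : ℕ) : ℕ := if Odd t then d t else m t - d t

/-- finite partial value in effective digits -/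
def valE (f : ℕ → ℕ → ℝ) (e : ℕ → ℕ) (K : ℕ) : ℝ :=
  ∑ j ∈ Finset.range K, rowSum f (j+1) (e (j+1)) * ∏ t ∈ Finset.Icc 1 j, f t (e t)

lemma effD_effD {m d : ℕ → ℕ} (hd : ValidDigits m d) : effD m (effD m d) = d := by
  funext t; unfold effD; split_ifs with h
  · rfl
  · exact Nat.sub_sub_self (hd t)

lemma valid_effD {m e : ℕ → ℕ} (he : ValidDigits m e) : ValidDigits m (effD m e) := by
  intro t; unfold effD; split_ifs
  · exact he t
  · exact Nat.sub_le _ _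

lemma tw_effD (f : ℕ → ℕ → ℝ) {m e : ℕ → ℕ} (he : ValidDigits m e) (t : ℕ) :
    tw m f t (effD m e t) = f t (e t) := by
  unfold tw effD; split_ifs with h
  · rfl
  · rw [Nat.sub_sub_self (he t)]

lemma rowSum_zero (f : ℕ → ℕ → ℝ) (s : ℕ) : rowSum f s 0 = 0 := by simp [rowSum]

lemma rowSum_one (f : ℕ → ℕ → ℝ) (s : ℕ) : rowSum f s 1 = f s 0 := by simp [rowSum]

lemma rowSum_succ (f : ℕ → ℕ → ℝ) (s k : ℕ) : rowSum f s (k+1) = rowSum f s k + f s k :=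
  Finset.sum_range_succ _ _

lemma negaVal_effD (m : ℕ → ℕ) (f : ℕ → ℕ → ℝ) (e : ℕ → ℕ) (he : ValidDigits m e) :
    negaVal m f (effD m e) =
      ∑' j : ℕ, rowSum f (j+1) (e (j+1)) * ∏ t ∈ Finset.Icc 1 j, f t (e t) := by
  unfold negaVal negaShift
  refine tsum_congr fun j => ?_
  simp only [Nat.zero_add]
  rw [tw_effD (rowSum f) he]
  congr 1
  exact Finset.prod_congr rfl fun t _ => tw_effD f he t

lemma negaVal_fin (m : ℕ → ℕ) (f : ℕ → ℕ → ℝ) (e : ℕ → ℕ) (he : ValidDigits m e) (K : ℕ)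
    (hs : ∀ t, K < t → e t = 0) :
    negaVal m f (effD m e) = valE f e K := by
  rw [negaVal_effD m f e he, valE]
  refine tsum_eq_sum ?_
  intro j hj
  have : e (j+1) = 0 := hs _ (Nat.lt_succ_of_le (by simpa using hj))
  rw [this, rowSum_zero, zero_mul]

lemma valE_congr {f : ℕ → ℕ → ℝ} {e e' : ℕ → ℕ} {K : ℕ}
    (h : ∀ t, t ≤ K → e t = e' t) : valE f e K = valE f e' K := by
  refine Finset.sum_congr rfl fun j hj => ?_
  have hj' : j + 1 ≤ K := Finset.mem_range.mp hj
  rw [h (j+1) hj']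
  congr 1
  exact Finset.prod_congr rfl fun t ht =>
    by rw [h t (le_trans (Finset.mem_Icc.mp ht).2 (le_trans (Nat.le_succ j) hj'))]

lemma valE_stable {f : ℕ → ℕ → ℝ} {e : ℕ → ℕ} {n M : ℕ}
    (hs : ∀ t, n < t → e t = 0) (h : n ≤ M) : valE f e M = valE f e n := by
  refine (Finset.sum_subset (Finset.range_subset_range.mpr h) fun j hjM hjn => ?_).symm
  have : e (j+1) = 0 := hs _ (Nat.lt_succ_of_le (by simpa using hjn))
  rw [this, rowSum_zero, zero_mul]

lemma valE_succ (f : ℕ → ℕ → ℝ) (e : ℕ → ℕ) (K : ℕ) :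
    valE f e (K+1) = valE f e K + rowSum f (K+1) (e (K+1)) * ∏ t ∈ Finset.Icc 1 K, f t (e t) :=
  Finset.sum_range_succ _ _

end Stmt14Aux

namespace Stmt14Aux

lemma rowSum_nonneg {m : ℕ → ℕ} {q : ℕ → ℕ → ℝ} (hq1 : ∀ t i, i ≤ m t → 0 < q t i)
    {s k : ℕ} (hk : k ≤ m s + 1) : 0 ≤ rowSum q s k := by
  refine Finset.sum_nonneg fun i hi => ?_
  have : i < k := Finset.mem_range.mp hi
  exact (hq1 s i (by omega)).le

lemma rowSum_le_one {m : ℕ → ℕ} {q : ℕ → ℕ → ℝ} (hq1 : ∀ t i, i ≤ m t → 0 < q t i)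
    (hq2 : ∀ t, ∑ i ∈ Finset.range (m t + 1), q t i = 1)
    {s k : ℕ} (hk : k ≤ m s + 1) : rowSum q s k ≤ 1 := by
  rw [← hq2 s]
  refine Finset.sum_le_sum_of_subset_of_nonneg (Finset.range_subset_range.mpr hk) fun i hi _ => ?_
  have : i < m s + 1 := Finset.mem_range.mp hi
  exact (hq1 s i (by omega)).le

lemma prodE_pos {m : ℕ → ℕ} {q : ℕ → ℕ → ℝ} (hq1 : ∀ t i, i ≤ m t → 0 < q t i)
    {e : ℕ → ℕ} (he : ValidDigits m e) (s : Finset ℕ) : 0 < ∏ t ∈ s, q t (e t) :=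
  Finset.prod_pos fun t _ => hq1 t (e t) (he t)

lemma valE_nonneg {m : ℕ → ℕ} {q : ℕ → ℕ → ℝ} (hq1 : ∀ t i, i ≤ m t → 0 < q t i)
    {e : ℕ → ℕ} (he : ValidDigits m e) (K : ℕ) : 0 ≤ valE q e K := by
  refine Finset.sum_nonneg fun j _ => mul_nonneg ?_ (prodE_pos hq1 he _).le
  exact rowSum_nonneg hq1 (by have := he (j+1); omega)

lemma valE_add_prod_le_one {m : ℕ → ℕ} {q : ℕ → ℕ → ℝ}
    (hq1 : ∀ t i, i ≤ m t → 0 < q t i)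
    (hq2 : ∀ t, ∑ i ∈ Finset.range (m t + 1), q t i = 1)
    {e : ℕ → ℕ} (he : ValidDigits m e) :
    ∀ K, valE q e K + ∏ t ∈ Finset.Icc 1 K, q t (e t) ≤ 1 := by
  intro K
  induction K with
  | zero => simp [valE]
  | succ K ih =>
    rw [valE_succ, Finset.prod_Icc_succ_top (Nat.succ_le_succ (Nat.zero_le K))]
    have hP : 0 < ∏ t ∈ Finset.Icc 1 K, q t (e t) := prodE_pos hq1 he _
    have hrs : rowSum q (K+1) (e (K+1)) + q (K+1) (e (K+1)) ≤ 1 := by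
      rw [← rowSum_succ]
      exact rowSum_le_one hq1 hq2 (by have := he (K+1); omega)
    nlinarith [hP, hrs]

lemma valE_le_one {m : ℕ → ℕ} {q : ℕ → ℕ → ℝ}
    (hq1 : ∀ t i, i ≤ m t → 0 < q t i)
    (hq2 : ∀ t, ∑ i ∈ Finset.range (m t + 1), q t i = 1)
    {e : ℕ → ℕ} (he : ValidDigits m e) (K : ℕ) : valE q e K ≤ 1 := by
  have := valE_add_prod_le_one hq1 hq2 he K
  have := (prodE_pos hq1 he (Finset.Icc 1 K)).le
  linarith

/-- telescoping evaluation when the effective digits are `m t` beyond `n`. -/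
lemma valE_tail_m {m : ℕ → ℕ} (f : ℕ → ℕ → ℝ)
    (hrow : ∀ s, rowSum f s (m s) = 1 - f s (m s))
    (c : ℕ → ℕ) (n : ℕ) (hn : 1 ≤ n) (htail : ∀ t, n < t → c t = m t) :
    ∀ K, n ≤ K →
    valE f c K = valE f (fun t => if t = n then c t + 1 else c t) n
      - (∏ t ∈ Finset.Icc 1 (n-1), f t (c t)) * f n (c n) * ∏ t ∈ Finset.Icc (n+1) K, f t (m t) := by
  intro K hK
  induction K, hK using Nat.le_induction with
  | base =>
    have hn1 : n - 1 + 1 = n := Nat.succ_pred_eq_of_pos hn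
    rw [Finset.Icc_eq_empty (show ¬ (n+1) ≤ n by omega), Finset.prod_empty, mul_one]
    have hL : valE f c n = valE f c (n-1)
        + rowSum f n (c n) * ∏ t ∈ Finset.Icc 1 (n-1), f t (c t) := by
      conv_lhs => rw [← hn1]
      rw [valE_succ, hn1]
    have hR : valE f (fun t => if t = n then c t + 1 else c t) n
        = valE f c (n-1) + (rowSum f n (c n) + f n (c n)) * ∏ t ∈ Finset.Icc 1 (n-1), f t (c t) := by
      conv_lhs => rw [← hn1]
      rw [valE_succ, hn1]
      congr 1
      · refine (valE_congr fun t ht => ?_)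
        have : t ≠ n := by omega
        simp [this]
      · rw [if_pos rfl, rowSum_succ]
        have hprod : (∏ t ∈ Finset.Icc 1 (n-1), f t (if t = n then c t + 1 else c t))
            = ∏ t ∈ Finset.Icc 1 (n-1), f t (c t) := by
          refine Finset.prod_congr rfl fun t ht => ?_
          have htn : t ≠ n := by have := (Finset.mem_Icc.mp ht).2; omega
          rw [if_neg htn]
        rw [hprod]
    rw [hL, hR]; ring
  | succ K hK ih =>
    have hsplit : ∏ t ∈ Finset.Icc 1 K, f t (c t)
        = (∏ t ∈ Finset.Icc 1 (n-1), f t (c t)) * f n (c n) * ∏ t ∈ Finset.Icc (n+1) K, f t (m t) := by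
      have h1 : Finset.Icc 1 K = Finset.Ioc 0 K := by ext x; simp [Finset.mem_Icc, Finset.mem_Ioc]; omega
      have h2 : Finset.Icc 1 (n-1) = Finset.Ioc 0 (n-1) := by ext x; simp [Finset.mem_Icc, Finset.mem_Ioc]; omega
      have h3 : Finset.Icc (n+1) K = Finset.Ioc n K := by ext x; simp [Finset.mem_Icc, Finset.mem_Ioc]
      rw [h1, h2, h3]
      rw [← Finset.prod_Ioc_consecutive _ (Nat.zero_le n) hK]
      rw [← Finset.prod_Ioc_consecutive (fun t => f t (c t)) (Nat.zero_le (n-1)) (Nat.sub_le n 1)]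
      have hmid : ∏ t ∈ Finset.Ioc (n-1) n, f t (c t) = f n (c n) := by
        have hset : Finset.Ioc (n-1) n = {n} := by
          ext x; simp [Finset.mem_Ioc]; omega
        rw [hset, Finset.prod_singleton]
      rw [hmid]
      congr 1
      exact Finset.prod_congr rfl fun t ht => by rw [htail t (Finset.mem_Ioc.mp ht).1]
    rw [valE_succ, ih, hsplit]
    have hc : c (K+1) = m (K+1) := htail _ (by omega)
    rw [hc, hrow]
    rw [Finset.prod_Icc_succ_top (by omega : n+1 ≤ K+1)]
    ring

end Stmt14Aux

namespace Stmt14Aux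

lemma negaVal_tail_m {m : ℕ → ℕ} {q : ℕ → ℕ → ℝ}
    (hq1 : ∀ t i, i ≤ m t → 0 < q t i)
    (hq2 : ∀ t, ∑ i ∈ Finset.range (m t + 1), q t i = 1)
    (e : ℕ → ℕ) (he : ValidDigits m e) (n : ℕ) (hn : 1 ≤ n)
    (htail : ∀ t, n < t → e t = m t)
    (hW : Tendsto (fun K => ∏ t ∈ Finset.Icc (n+1) K, q t (m t)) atTop (𝓝 0)) :
    negaVal m q (effD m e) = valE q (fun t => if t = n then e t + 1 else e t) n := by
  have hrow : ∀ s, rowSum q s (m s) = 1 - q s (m s) := by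
    intro s
    have := hq2 s
    rw [Finset.sum_range_succ] at this
    unfold rowSum
    linarith
  set T : ℕ → ℝ := fun j => rowSum q (j+1) (e (j+1)) * ∏ t ∈ Finset.Icc 1 j, q t (e t) with hT
  have hTnn : ∀ j, 0 ≤ T j := by
    intro j
    exact mul_nonneg (rowSum_nonneg hq1 (by have := he (j+1); omega)) (prodE_pos hq1 he _).le
  have hpart : ∀ K, ∑ j ∈ Finset.range K, T j = valE q e K := fun K => rfl
  have hbdd : ∀ K, ∑ j ∈ Finset.range K, T j ≤ 1 := by
    intro K; rw [hpart]; exact valE_le_one hq1 hq2 he K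
  have hsum : Summable T := summable_of_sum_range_le hTnn hbdd
  have hlim1 : Tendsto (fun K => ∑ j ∈ Finset.range K, T j) atTop (𝓝 (∑' j, T j)) :=
    hsum.hasSum.tendsto_sum_nat
  set R : ℝ := valE q (fun t => if t = n then e t + 1 else e t) n with hR
  set C : ℝ := (∏ t ∈ Finset.Icc 1 (n-1), q t (e t)) * q n (e n) with hC
  have hlim2 : Tendsto (fun K => ∑ j ∈ Finset.range K, T j) atTop (𝓝 R) := by
    have h2 : Tendsto (fun K => R - C * ∏ t ∈ Finset.Icc (n+1) K, q t (m t)) atTop (𝓝 R) := by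
      have h3 : Tendsto (fun K : ℕ => R - C * ∏ t ∈ Finset.Icc (n+1) K, q t (m t))
          atTop (𝓝 (R - C * 0)) :=
        (tendsto_const_nhds.sub (hW.const_mul C))
      simpa using h3
    refine h2.congr' ?_
    filter_upwards [eventually_ge_atTop n] with K hK
    rw [hpart, valE_tail_m q hrow e n hn htail K hK]
  have := tendsto_nhds_unique hlim1 hlim2
  rw [negaVal_effD m q e he]
  exact this

end Stmt14Aux

open Stmt14Aux

/-- under the sign-alternation condition `p_{i,n}·p_{i−1,n} < 0` and the
non-vanishing of at least one of the two limit products, `F` has neither a finite nor an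
infinite derivative at any nega-`Q̃`-rational point. -/
theorem stmt14 (m : ℕ → ℕ) (q p : ℕ → ℕ → ℝ)
    (hq1 : ∀ n i, i ≤ m n → 0 < q n i)
    (hq2 : ∀ n, ∑ i ∈ Finset.range (m n + 1), q n i = 1)
    (hq4 : ∀ d, ValidDigits m d →
      Tendsto (fun N => ∏ j ∈ Finset.Icc 1 N, q j (d j)) atTop (𝓝 0))
    (hp1 : ∀ n i, i ≤ m n → p n i ∈ Set.Ioo (-1 : ℝ) 1)
    (hp2 : ∀ n, ∑ i ∈ Finset.range (m n + 1), p n i = 1)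
    (hp3 : ∀ n k, 1 ≤ k → k ≤ m n → rowSum p n k ∈ Set.Ioo (0 : ℝ) 1)
    (hp4 : ∀ d, ValidDigits m d →
      Tendsto (fun N => ∏ j ∈ Finset.Icc 1 N, |p j (d j)|) atTop (𝓝 0))
    (halt : ∀ n i, 1 ≤ i → i ≤ m n → p n i * p n (i - 1) < 0)
    (hlim : ¬ (Tendsto (fun N => ∏ k ∈ Finset.Icc 1 N, p k 0 / q k 0) atTop (𝓝 0) ∧
      Tendsto (fun N => ∏ k ∈ Finset.Icc 1 N, p k (m k) / q k (m k)) atTop (𝓝 0)))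
    (G : ℝ → ℝ)
    (hG : ∀ d, ValidDigits m d → G (negaVal m q d) = negaVal m p d)
    (hsurj : ∀ x ∈ Set.Icc (0 : ℝ) 1, ∃ d, ValidDigits m d ∧ x = negaVal m q d)
    -- a nega-`Q̃`-rational point `x₀`
    (d : ℕ → ℕ) (hd : ValidDigits m d) (n : ℕ) (hn : 1 ≤ n) (hdn : d n ≠ 0)
    (htail : ∀ k, n < k → d k = if Odd (k - n) then m k else 0) :
    (¬ ∃ L : ℝ,
      Tendsto (fun y => (G y - G (negaVal m q d)) / (y - negaVal m q d))
        (𝓝[Set.Icc (0 : ℝ) 1 \ {negaVal m q d}] (negaVal m q d)) (𝓝 L)) ∧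
    ¬ Tendsto (fun y => (G y - G (negaVal m q d)) / (y - negaVal m q d))
        (𝓝[Set.Icc (0 : ℝ) 1 \ {negaVal m q d}] (negaVal m q d)) atTop ∧
    ¬ Tendsto (fun y => (G y - G (negaVal m q d)) / (y - negaVal m q d))
        (𝓝[Set.Icc (0 : ℝ) 1 \ {negaVal m q d}] (negaVal m q d)) atBot := by
  classical
  -- basic positivity facts
  have hm1 : ∀ t, 1 ≤ m t := by
    intro t
    by_contra h
    have hm0 : m t = 0 := by omega
    have h2 := hp2 t
    rw [hm0] at h2
    simp [Finset.sum_range_one] at h2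
    have := (hp1 t 0 (by omega)).2
    rw [h2] at this
    exact absurd this (lt_irrefl 1)
  have hp0 : ∀ t, 0 < p t 0 := by
    intro t
    have := (hp3 t 1 le_rfl (hm1 t)).1
    rwa [rowSum_one] at this
  have hrowq : ∀ s, rowSum q s (m s) = 1 - q s (m s) := by
    intro s
    have h2 := hq2 s
    rw [Finset.sum_range_succ] at h2
    unfold rowSum
    linarith
  have hrowp : ∀ s, rowSum p s (m s) = 1 - p s (m s) := by
    intro s
    have h2 := hp2 s
    rw [Finset.sum_range_succ] at h2
    unfold rowSum
    linarith
  have hpm : ∀ t, 0 < p t (m t) := by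
    intro t
    have h2 := (hp3 t (m t) (hm1 t) le_rfl).2
    have := hrowp t
    linarith
  have hpne : ∀ t i, i ≤ m t → p t i ≠ 0 := by
    intro t i hi
    match i with
    | 0 => exact (hp0 t).ne'
    | (i+1) =>
      intro h0
      have := halt t (i+1) (by omega) hi
      rw [h0, zero_mul] at this
      exact absurd this (lt_irrefl 0)
  -- splitting products
  have hsplitIcc : ∀ (g : ℕ → ℝ) (a K : ℕ), a ≤ K →
      (∏ t ∈ Finset.Icc 1 a, g t) * ∏ t ∈ Finset.Icc (a+1) K, g t
        = ∏ t ∈ Finset.Icc 1 K, g t := by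
    intro g a K h
    rw [show Finset.Icc 1 a = Finset.Ioc 0 a from by
          ext x; simp [Finset.mem_Icc, Finset.mem_Ioc]; omega,
        show Finset.Icc (a+1) K = Finset.Ioc a K from by
          ext x; simp [Finset.mem_Icc, Finset.mem_Ioc],
        show Finset.Icc 1 K = Finset.Ioc 0 K from by
          ext x; simp [Finset.mem_Icc, Finset.mem_Ioc]; omega]
    exact Finset.prod_Ioc_consecutive _ (Nat.zero_le a) h
  have hsplitn : ∀ (g : ℕ → ℝ),
      (∏ t ∈ Finset.Icc 1 n, g t) = (∏ t ∈ Finset.Icc 1 (n-1), g t) * g n := by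
    intro g
    have hins : Finset.Icc 1 n = insert n (Finset.Icc 1 (n-1)) := by
      ext x; simp [Finset.mem_Icc, Finset.mem_insert]; omega
    rw [hins, Finset.prod_insert (by simp [Finset.mem_Icc]; omega), mul_comm]
  -- the special digit data
  set x₀ := negaVal m q d with hx₀def
  set ec : ℕ := if Odd n then d n - 1 else m n - d n with hec
  set e₀ : ℕ → ℕ := fun t => if t < n then effD m d t else if t = n then ec + 1 else 0
    with he₀def
  have hdn1 : 1 ≤ d n := Nat.one_le_iff_ne_zero.mpr hdn
  have hecm : ec + 1 ≤ m n := by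
    have := hd n
    simp only [hec]
    split_ifs <;> omega
  have he₀ : ValidDigits m e₀ := by
    intro t
    simp only [he₀def]
    split_ifs with h1 h2
    · exact valid_effD hd t
    · subst h2; exact hecm
    · exact Nat.zero_le _
  have he₀supp : ∀ t, n < t → e₀ t = 0 := by
    intro t ht
    simp only [he₀def]
    rw [if_neg (by omega), if_neg (by omega)]
  have he₀n : e₀ n = ec + 1 := by
    simp [he₀def]
  have he₀lt : ∀ t, t < n → e₀ t = effD m d t := by
    intro t ht
    simp only [he₀def]
    rw [if_pos ht]
  set ed : ℕ → ℕ := effD m d with hed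
  have heded : effD m ed = d := effD_effD hd
  have hedvalid : ValidDigits m ed := valid_effD hd
  have hedtail : ∀ t, n < t → ed t = if Odd n then 0 else m t := by
    intro t ht
    have hdt := htail t ht
    simp only [hed, effD]
    by_cases h4 : Odd n
    · rw [if_pos h4]
      by_cases h3 : Odd t
      · have h5 : ¬ Odd (t - n) := by
          rw [Nat.odd_iff] at h3 h4 ⊢
          omega
        rw [if_pos h3, hdt, if_neg h5]
      · have h5 : Odd (t - n) := by
          rw [Nat.odd_iff] at h3 h4 ⊢
          omega
        rw [if_neg h3, hdt, if_pos h5, Nat.sub_self]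
    · rw [if_neg h4]
      by_cases h3 : Odd t
      · have h5 : Odd (t - n) := by
          rw [Nat.odd_iff] at h3 h4 ⊢
          omega
        rw [if_pos h3, hdt, if_pos h5]
      · have h5 : ¬ Odd (t - n) := by
          rw [Nat.odd_iff] at h3 h4 ⊢
          omega
        rw [if_neg h3, hdt, if_neg h5, Nat.sub_zero]
  have hedn : ed n = if Odd n then ec + 1 else ec := by
    simp only [hed, effD, hec]
    by_cases h4 : Odd n
    · rw [if_pos h4, if_pos h4, if_pos h4]; omega
    · rw [if_neg h4, if_neg h4, if_neg h4]
  -- the tail-product limit for q at digits m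
  have hWq : Tendsto (fun K => ∏ t ∈ Finset.Icc (n+1) K, q t (m t)) atTop (𝓝 0) := by
    have hqm := hq4 (fun t => m t) (fun t => le_rfl)
    have hPn : (0:ℝ) < ∏ t ∈ Finset.Icc 1 n, q t (m t) :=
      Finset.prod_pos fun t _ => hq1 t (m t) le_rfl
    have h2 : Tendsto (fun K => (∏ t ∈ Finset.Icc 1 K, q t (m t))
        / ∏ t ∈ Finset.Icc 1 n, q t (m t)) atTop
        (𝓝 (0 / ∏ t ∈ Finset.Icc 1 n, q t (m t))) := hqm.div_const _
    rw [zero_div] at h2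
    refine Tendsto.congr' ?_ h2
    filter_upwards [eventually_ge_atTop n] with K hK
    rw [← hsplitIcc (fun t => q t (m t)) n K hK]
    field_simp
  -- x₀ as a finite value
  have hx0 : x₀ = valE q e₀ n := by
    by_cases hodd : Odd n
    · have hsupp : ∀ t, n < t → ed t = 0 := by
        intro t ht; rw [hedtail t ht, if_pos hodd]
      have h1 : negaVal m q d = valE q ed n := by
        rw [← heded]; exact negaVal_fin m q ed hedvalid n hsupp
      rw [hx₀def, h1]
      refine valE_congr fun t ht => ?_
      rcases Nat.lt_or_ge t n with h2 | h2
      · rw [he₀lt t h2]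
      · have h3 : t = n := by omega
        subst h3
        rw [hedn, if_pos hodd, he₀n]
    · have htailm : ∀ t, n < t → ed t = m t := by
        intro t ht; rw [hedtail t ht, if_neg hodd]
      have h1 : negaVal m q d
          = valE q (fun t => if t = n then ed t + 1 else ed t) n := by
        rw [← heded]
        exact negaVal_tail_m hq1 hq2 ed hedvalid n hn htailm hWq
      rw [hx₀def, h1]
      refine valE_congr fun t ht => ?_
      by_cases h3 : t = n
      · subst h3
        rw [if_pos rfl, hedn, if_neg hodd, he₀n]
      · have h4 : t < n := by omega
        rw [if_neg h3, he₀lt t h4]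
  have hqfin : negaVal m q (effD m e₀) = valE q e₀ n := negaVal_fin m q e₀ he₀ n he₀supp
  have hpfin : negaVal m p (effD m e₀) = valE p e₀ n := negaVal_fin m p e₀ he₀ n he₀supp
  have hGx0 : G x₀ = valE p e₀ n := by
    have h1 := hG (effD m e₀) (valid_effD he₀)
    rw [hqfin, ← hx0] at h1
    rw [h1, hpfin]
  -- the Y-family (right approximants)
  set eY : ℕ → ℕ → ℕ := fun M t => if t = M+1 then 1 else e₀ t with heY
  have hYvalid : ∀ M, ValidDigits m (eY M) := by
    intro M t
    simp only [heY]
    by_cases h : t = M+1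
    · rw [if_pos h]; subst h; exact hm1 _
    · rw [if_neg h]; exact he₀ t
  have hYval : ∀ (f : ℕ → ℕ → ℝ) (M : ℕ), n ≤ M →
      negaVal m f (effD m (eY M))
        = valE f e₀ n + (∏ t ∈ Finset.Icc 1 M, f t (e₀ t)) * f (M+1) 0 := by
    intro f M hM
    have hsupp : ∀ t, M+1 < t → eY M t = 0 := by
      intro t ht
      simp only [heY]
      rw [if_neg (by omega)]
      exact he₀supp t (by omega)
    rw [negaVal_fin m f _ (hYvalid M) (M+1) hsupp, valE_succ]
    congr 1
    · have h1 : valE f (eY M) M = valE f e₀ M :=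
        valE_congr fun t ht => by simp only [heY]; rw [if_neg (by omega)]
      rw [h1, valE_stable he₀supp hM]
    · have h2 : eY M (M+1) = 1 := by simp [heY]
      rw [h2, rowSum_one]
      have h3 : (∏ t ∈ Finset.Icc 1 M, f t (eY M t)) = ∏ t ∈ Finset.Icc 1 M, f t (e₀ t) :=
        Finset.prod_congr rfl fun t ht => by
          simp only [heY]
          rw [if_neg (by have := (Finset.mem_Icc.mp ht).2; omega)]
      rw [h3, mul_comm]
  set Y : ℕ → ℝ := fun M => negaVal m q (effD m (eY M)) with hYdef
  have hYdiff : ∀ M, n ≤ M → Y M - x₀ = ∏ t ∈ Finset.Icc 1 (M+1), q t (e₀ t) := by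
    intro M hM
    rw [hYdef]
    simp only
    rw [hYval q M hM, hx0]
    rw [Finset.prod_Icc_succ_top (by omega : 1 ≤ M+1), he₀supp (M+1) (by omega)]
    ring
  have hYmem : ∀ M, n ≤ M → Y M ∈ Set.Icc (0:ℝ) 1 \ {x₀} := by
    intro M hM
    have hfin : Y M = valE q (eY M) (M+1) := by
      rw [hYdef]
      simp only
      refine negaVal_fin m q _ (hYvalid M) (M+1) fun t ht => ?_
      simp only [heY]
      rw [if_neg (by omega)]
      exact he₀supp t (by omega)
    constructor
    · rw [hfin]
      exact ⟨valE_nonneg hq1 (hYvalid M) _, valE_le_one hq1 hq2 (hYvalid M) _⟩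
    · intro hmem
      have h1 : Y M = x₀ := hmem
      have h2 := hYdiff M hM
      rw [h1, sub_self] at h2
      exact absurd h2.symm (prodE_pos hq1 he₀ (Finset.Icc 1 (M+1))).ne'
  have hYtendsto : Tendsto Y atTop (𝓝[Set.Icc (0:ℝ) 1 \ {x₀}] x₀) := by
    rw [tendsto_nhdsWithin_iff]
    constructor
    · have hq40 := hq4 e₀ he₀
      have h1 : Tendsto (fun M => x₀ + ∏ t ∈ Finset.Icc 1 (M+1), q t (e₀ t)) atTop
          (𝓝 (x₀ + 0)) :=
        tendsto_const_nhds.add (hq40.comp (tendsto_add_atTop_nat 1))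
      rw [add_zero] at h1
      refine Tendsto.congr' ?_ h1
      filter_upwards [eventually_ge_atTop n] with M hM
      have := hYdiff M hM
      linarith
    · filter_upwards [eventually_ge_atTop n] with M hM
      exact hYmem M hM
  -- the Z-family (left approximants)
  set cInf : ℕ → ℕ := fun t => if t < n then e₀ t else if t = n then ec else m t with hcInf
  have hcvalid : ValidDigits m cInf := by
    intro t
    simp only [hcInf]
    split_ifs with h1 h2
    · exact he₀ t
    · subst h2; omega
    · exact le_rfl
  set eZ : ℕ → ℕ → ℕ := fun K t => if t ≤ K then cInf t else 0 with heZ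
  have hZvalid : ∀ K, ValidDigits m (eZ K) := by
    intro K t
    simp only [heZ]
    split_ifs
    · exact hcvalid t
    · exact Nat.zero_le _
  have hZval : ∀ (f : ℕ → ℕ → ℝ), (∀ s, rowSum f s (m s) = 1 - f s (m s)) →
      ∀ (K : ℕ), n ≤ K →
      negaVal m f (effD m (eZ K))
        = valE f e₀ n - (∏ t ∈ Finset.Icc 1 (n-1), f t (e₀ t)) * f n ec
            * ∏ t ∈ Finset.Icc (n+1) K, f t (m t) := by
    intro f hrow K hK
    have hsupp : ∀ t, K < t → eZ K t = 0 := by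
      intro t ht
      simp only [heZ]
      rw [if_neg (by omega)]
    rw [negaVal_fin m f _ (hZvalid K) K hsupp]
    have h1 : valE f (eZ K) K = valE f cInf K :=
      valE_congr fun t ht => by simp only [heZ]; rw [if_pos ht]
    have htailc : ∀ t, n < t → cInf t = m t := by
      intro t ht
      simp only [hcInf]
      rw [if_neg (by omega), if_neg (by omega)]
    rw [h1, valE_tail_m f hrow cInf n hn htailc K hK]
    have hcn : cInf n = ec := by simp [hcInf]
    have h2 : valE f (fun t => if t = n then cInf t + 1 else cInf t) n = valE f e₀ n := by
      refine valE_congr fun t ht => ?_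
      by_cases h3 : t = n
      · subst h3
        rw [if_pos rfl, hcn, he₀n]
      · have h4 : t < n := by omega
        rw [if_neg h3, he₀lt t h4]
        simp only [hcInf]
        rw [if_pos h4, he₀lt t h4]
    have h3 : (∏ t ∈ Finset.Icc 1 (n-1), f t (cInf t))
        = ∏ t ∈ Finset.Icc 1 (n-1), f t (e₀ t) :=
      Finset.prod_congr rfl fun t ht => by
        have h4 : t < n := by have := (Finset.mem_Icc.mp ht).2; omega
        simp only [hcInf]
        rw [if_pos h4]
    rw [h2, h3, hcn]
  set Z : ℕ → ℝ := fun K => negaVal m q (effD m (eZ K)) with hZdef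
  have hecm' : ec ≤ m n := by omega
  have hCqpos : 0 < (∏ t ∈ Finset.Icc 1 (n-1), q t (e₀ t)) * q n ec :=
    mul_pos (prodE_pos hq1 he₀ _) (hq1 n ec hecm')
  have hWqpos : ∀ K, 0 < ∏ t ∈ Finset.Icc (n+1) K, q t (m t) :=
    fun K => Finset.prod_pos fun t _ => hq1 t (m t) le_rfl
  have hWppos : ∀ K, 0 < ∏ t ∈ Finset.Icc (n+1) K, p t (m t) :=
    fun K => Finset.prod_pos fun t _ => hpm t
  have hZdiff : ∀ K, n ≤ K → Z K - x₀
      = -((∏ t ∈ Finset.Icc 1 (n-1), q t (e₀ t)) * q n ec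
          * ∏ t ∈ Finset.Icc (n+1) K, q t (m t)) := by
    intro K hK
    rw [hZdef]
    simp only
    rw [hZval q hrowq K hK, hx0]
    ring
  have hZmem : ∀ K, n ≤ K → Z K ∈ Set.Icc (0:ℝ) 1 \ {x₀} := by
    intro K hK
    have hfin : Z K = valE q (eZ K) K := by
      rw [hZdef]
      simp only
      refine negaVal_fin m q _ (hZvalid K) K fun t ht => ?_
      simp only [heZ]
      rw [if_neg (by omega)]
    constructor
    · rw [hfin]
      exact ⟨valE_nonneg hq1 (hZvalid K) _, valE_le_one hq1 hq2 (hZvalid K) _⟩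
    · intro hmem
      have h1 : Z K = x₀ := hmem
      have h2 := hZdiff K hK
      rw [h1, sub_self] at h2
      have h3 := mul_pos hCqpos (hWqpos K)
      nlinarith [h2, h3]
  have hZtendsto : Tendsto Z atTop (𝓝[Set.Icc (0:ℝ) 1 \ {x₀}] x₀) := by
    rw [tendsto_nhdsWithin_iff]
    constructor
    · have h1 : Tendsto (fun K => x₀ -
          (∏ t ∈ Finset.Icc 1 (n-1), q t (e₀ t)) * q n ec
            * ∏ t ∈ Finset.Icc (n+1) K, q t (m t)) atTop
          (𝓝 (x₀ - (∏ t ∈ Finset.Icc 1 (n-1), q t (e₀ t)) * q n ec * 0)) :=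
        tendsto_const_nhds.sub (hWq.const_mul _)
      rw [mul_zero, sub_zero] at h1
      refine Tendsto.congr' ?_ h1
      filter_upwards [eventually_ge_atTop n] with K hK
      have := hZdiff K hK
      linarith
    · filter_upwards [eventually_ge_atTop n] with K hK
      exact hZmem K hK
  -- constants and signs
  have hsplit0 : ∀ (f : ℕ → ℕ → ℝ) (M : ℕ), n ≤ M → (∏ t ∈ Finset.Icc 1 M, f t (e₀ t))
      = (∏ t ∈ Finset.Icc 1 n, f t (e₀ t)) * ∏ t ∈ Finset.Icc (n+1) M, f t 0 := by
    intro f M hM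
    rw [← hsplitIcc (fun t => f t (e₀ t)) n M hM]
    congr 1
    exact Finset.prod_congr rfl fun t ht => by
      rw [he₀supp t (by have := (Finset.mem_Icc.mp ht).1; omega)]
  set Pre : ℝ := ∏ t ∈ Finset.Icc 1 (n-1), p t (e₀ t) with hPredef
  set A : ℝ := ∏ t ∈ Finset.Icc 1 n, p t (e₀ t) with hAdef
  set B : ℝ := Pre * p n ec with hBdef
  have hPrene : Pre ≠ 0 := by
    rw [hPredef]
    exact Finset.prod_ne_zero_iff.mpr fun t _ => hpne t (e₀ t) (he₀ t)
  have hAeq : A = Pre * p n (ec+1) := by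
    rw [hAdef, hsplitn (fun t => p t (e₀ t)), he₀n, hPredef]
  have hAne : A ≠ 0 := by
    rw [hAeq]
    exact mul_ne_zero hPrene (hpne n (ec+1) hecm)
  have hBne : B ≠ 0 := mul_ne_zero hPrene (hpne n ec hecm')
  have hABneg : A * B < 0 := by
    have h1 := halt n (ec+1) (by omega) hecm
    have h2 : (ec+1) - 1 = ec := by omega
    rw [h2] at h1
    have h3 : A * B = Pre^2 * (p n (ec+1) * p n ec) := by rw [hAeq, hBdef]; ring
    rw [h3]
    have h4 : 0 < Pre^2 := lt_of_le_of_ne (sq_nonneg Pre) (Ne.symm (pow_ne_zero 2 hPrene))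
    exact mul_neg_of_pos_of_neg h4 h1
  have hPq : ∀ N, (0:ℝ) < ∏ t ∈ Finset.Icc 1 N, q t (e₀ t) := fun N => prodE_pos hq1 he₀ _
  -- quotient formulas
  have hquotY : ∀ M, n ≤ M → (G (Y M) - G x₀) / (Y M - x₀)
      = ((∏ t ∈ Finset.Icc 1 M, p t (e₀ t)) * p (M+1) 0)
        / ((∏ t ∈ Finset.Icc 1 M, q t (e₀ t)) * q (M+1) 0) := by
    intro M hM
    have hnum : G (Y M) - G x₀ = (∏ t ∈ Finset.Icc 1 M, p t (e₀ t)) * p (M+1) 0 := by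
      simp only [hYdef]
      rw [hG _ (valid_effD (hYvalid M)), hYval p M hM, hGx0]
      ring
    have hden : Y M - x₀ = (∏ t ∈ Finset.Icc 1 M, q t (e₀ t)) * q (M+1) 0 := by
      rw [hYdiff M hM, Finset.prod_Icc_succ_top (by omega : 1 ≤ M+1),
        he₀supp (M+1) (by omega)]
    rw [hnum, hden]
  have hquotZ : ∀ K, n ≤ K → (G (Z K) - G x₀) / (Z K - x₀)
      = (B * ∏ t ∈ Finset.Icc (n+1) K, p t (m t))
        / ((∏ t ∈ Finset.Icc 1 (n-1), q t (e₀ t)) * q n ec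
            * ∏ t ∈ Finset.Icc (n+1) K, q t (m t)) := by
    intro K hK
    have hnum : G (Z K) - G x₀ = -(B * ∏ t ∈ Finset.Icc (n+1) K, p t (m t)) := by
      simp only [hZdef]
      rw [hG _ (valid_effD (hZvalid K)), hZval p hrowp K hK, hGx0, hBdef, hPredef]
      ring
    rw [hnum, hZdiff K hK, neg_div_neg_eq]
  -- positivity for the variable parts
  have hqposM : ∀ M, (0:ℝ) < (∏ t ∈ Finset.Icc 1 M, q t (e₀ t)) * q (M+1) 0 :=
    fun M => mul_pos (hPq M) (hq1 (M+1) 0 (Nat.zero_le _))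
  have hppos0 : ∀ M, (0:ℝ) < ∏ t ∈ Finset.Icc (n+1) M, p t 0 :=
    fun M => Finset.prod_pos fun t _ => hp0 t
  have hqpos0 : ∀ M, (0:ℝ) < ∏ t ∈ Finset.Icc (n+1) M, q t 0 :=
    fun M => Finset.prod_pos fun t _ => hq1 t 0 (Nat.zero_le _)
  have hnumY : ∀ M, n ≤ M → (∏ t ∈ Finset.Icc 1 M, p t (e₀ t)) * p (M+1) 0
      = A * ((∏ t ∈ Finset.Icc (n+1) M, p t 0) * p (M+1) 0) := by
    intro M hM
    rw [hsplit0 p M hM, ← hAdef]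
    ring
  -- sign facts
  have hsignYpos : 0 < A → ∀ M, n ≤ M → 0 < (G (Y M) - G x₀) / (Y M - x₀) := by
    intro hApos M hM
    rw [hquotY M hM]
    refine div_pos ?_ (hqposM M)
    rw [hnumY M hM]
    exact mul_pos hApos (mul_pos (hppos0 M) (hp0 (M+1)))
  have hsignYneg : A < 0 → ∀ M, n ≤ M → (G (Y M) - G x₀) / (Y M - x₀) < 0 := by
    intro hAneg M hM
    rw [hquotY M hM]
    refine div_neg_of_neg_of_pos ?_ (hqposM M)
    rw [hnumY M hM]
    exact mul_neg_of_neg_of_pos hAneg (mul_pos (hppos0 M) (hp0 (M+1)))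
  have hsignZpos : 0 < B → ∀ K, n ≤ K → 0 < (G (Z K) - G x₀) / (Z K - x₀) := by
    intro hBpos K hK
    rw [hquotZ K hK]
    exact div_pos (mul_pos hBpos (hWppos K)) (mul_pos hCqpos (hWqpos K))
  have hsignZneg : B < 0 → ∀ K, n ≤ K → (G (Z K) - G x₀) / (Z K - x₀) < 0 := by
    intro hBneg K hK
    rw [hquotZ K hK]
    exact div_neg_of_neg_of_pos (mul_neg_of_neg_of_pos hBneg (hWppos K))
      (mul_pos hCqpos (hWqpos K))
  -- limit extraction in the zero case
  have hlimY : Tendsto (fun M => (G (Y M) - G x₀) / (Y M - x₀)) atTop (𝓝 0) →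
      Tendsto (fun N => ∏ k ∈ Finset.Icc 1 N, p k 0 / q k 0) atTop (𝓝 0) := by
    intro hY
    have h1 := hY.mul_const ((∏ t ∈ Finset.Icc 1 n, q t (e₀ t)) / A)
    rw [zero_mul] at h1
    have h2 : Tendsto (fun M => (∏ t ∈ Finset.Icc (n+1) (M+1), p t 0)
        / (∏ t ∈ Finset.Icc (n+1) (M+1), q t 0)) atTop (𝓝 0) := by
      refine Tendsto.congr' ?_ h1
      filter_upwards [eventually_ge_atTop n] with M hM
      rw [hquotY M hM, hnumY M hM, hsplit0 q M hM]
      rw [Finset.prod_Icc_succ_top (show n+1 ≤ M+1 by omega),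
        Finset.prod_Icc_succ_top (show n+1 ≤ M+1 by omega)]
      have h3 := (hPq n).ne'
      have h4 := (hqpos0 M).ne'
      have h5 := (hq1 (M+1) 0 (Nat.zero_le _)).ne'
      field_simp
    have h3 : Tendsto (fun N => (∏ t ∈ Finset.Icc (n+1) N, p t 0)
        / (∏ t ∈ Finset.Icc (n+1) N, q t 0)) atTop (𝓝 0) :=
      (tendsto_add_atTop_iff_nat 1).mp h2
    have h4 := h3.const_mul (∏ k ∈ Finset.Icc 1 n, p k 0 / q k 0)
    rw [mul_zero] at h4
    refine Tendsto.congr' ?_ h4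
    filter_upwards [eventually_ge_atTop n] with N hN
    rw [← hsplitIcc (fun k => p k 0 / q k 0) n N hN, Finset.prod_div_distrib,
      Finset.prod_div_distrib]
  have hlimZ : Tendsto (fun K => (G (Z K) - G x₀) / (Z K - x₀)) atTop (𝓝 0) →
      Tendsto (fun N => ∏ k ∈ Finset.Icc 1 N, p k (m k) / q k (m k)) atTop (𝓝 0) := by
    intro hZ
    have h1 := hZ.mul_const ((∏ t ∈ Finset.Icc 1 (n-1), q t (e₀ t)) * q n ec / B)
    rw [zero_mul] at h1
    have h2 : Tendsto (fun K => (∏ t ∈ Finset.Icc (n+1) K, p t (m t))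
        / (∏ t ∈ Finset.Icc (n+1) K, q t (m t))) atTop (𝓝 0) := by
      refine Tendsto.congr' ?_ h1
      filter_upwards [eventually_ge_atTop n] with K hK
      rw [hquotZ K hK]
      have h3 := hCqpos.ne'
      have h4 := (hWqpos K).ne'
      have h5 := (prodE_pos hq1 he₀ (Finset.Icc 1 (n-1))).ne'
      have h6 := (hq1 n ec hecm').ne'
      field_simp
    have h4 := h2.const_mul (∏ k ∈ Finset.Icc 1 n, p k (m k) / q k (m k))
    rw [mul_zero] at h4
    refine Tendsto.congr' ?_ h4
    filter_upwards [eventually_ge_atTop n] with N hN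
    rw [← hsplitIcc (fun k => p k (m k) / q k (m k)) n N hN, Finset.prod_div_distrib,
      Finset.prod_div_distrib]
  -- the three conclusions
  refine ⟨?_, ?_, ?_⟩
  · rintro ⟨L, hL⟩
    have hY : Tendsto (fun M => (G (Y M) - G x₀) / (Y M - x₀)) atTop (𝓝 L) := by
      simpa [Function.comp_def] using hL.comp hYtendsto
    have hZt : Tendsto (fun K => (G (Z K) - G x₀) / (Z K - x₀)) atTop (𝓝 L) := by
      simpa [Function.comp_def] using hL.comp hZtendsto
    have hL0 : L = 0 := by
      rcases lt_or_gt_of_ne hAne with hAneg | hApos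
      · have hBpos : 0 < B := by
          rcases lt_trichotomy B 0 with h | h | h
          · have := mul_pos_of_neg_of_neg hAneg h; linarith
          · rw [h, mul_zero] at hABneg; linarith
          · exact h
        have h1 : L ≤ 0 := le_of_tendsto hY (by
          filter_upwards [eventually_ge_atTop n] with M hM
          exact (hsignYneg hAneg M hM).le)
        have h2 : 0 ≤ L := ge_of_tendsto hZt (by
          filter_upwards [eventually_ge_atTop n] with K hK
          exact (hsignZpos hBpos K hK).le)
        linarith
      · have hBneg : B < 0 := by
          rcases lt_trichotomy B 0 with h | h | h
          · exact h
          · rw [h, mul_zero] at hABneg; linarith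
          · have := mul_pos hApos h; linarith
        have h1 : 0 ≤ L := ge_of_tendsto hY (by
          filter_upwards [eventually_ge_atTop n] with M hM
          exact (hsignYpos hApos M hM).le)
        have h2 : L ≤ 0 := le_of_tendsto hZt (by
          filter_upwards [eventually_ge_atTop n] with K hK
          exact (hsignZneg hBneg K hK).le)
        linarith
    rw [hL0] at hY hZt
    exact hlim ⟨hlimY hY, hlimZ hZt⟩
  · intro hL
    have hY : Tendsto (fun M => (G (Y M) - G x₀) / (Y M - x₀)) atTop atTop := by
      simpa [Function.comp_def] using hL.comp hYtendsto
    have hZt : Tendsto (fun K => (G (Z K) - G x₀) / (Z K - x₀)) atTop atTop := by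
      simpa [Function.comp_def] using hL.comp hZtendsto
    rcases lt_or_gt_of_ne hAne with hAneg | hApos
    · obtain ⟨M, hM1, hM2⟩ := ((hY.eventually_gt_atTop 0).and (eventually_ge_atTop n)).exists
      exact absurd hM1 (not_lt.mpr (hsignYneg hAneg M hM2).le)
    · have hBneg : B < 0 := by
        rcases lt_trichotomy B 0 with h | h | h
        · exact h
        · rw [h, mul_zero] at hABneg; linarith
        · have := mul_pos hApos h; linarith
      obtain ⟨K, hK1, hK2⟩ := ((hZt.eventually_gt_atTop 0).and (eventually_ge_atTop n)).exists
      exact absurd hK1 (not_lt.mpr (hsignZneg hBneg K hK2).le)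
  · intro hL
    have hY : Tendsto (fun M => (G (Y M) - G x₀) / (Y M - x₀)) atTop atBot := by
      simpa [Function.comp_def] using hL.comp hYtendsto
    have hZt : Tendsto (fun K => (G (Z K) - G x₀) / (Z K - x₀)) atTop atBot := by
      simpa [Function.comp_def] using hL.comp hZtendsto
    rcases lt_or_gt_of_ne hAne with hAneg | hApos
    · have hBpos : 0 < B := by
        rcases lt_trichotomy B 0 with h | h | h
        · have := mul_pos_of_neg_of_neg hAneg h; linarith
        · rw [h, mul_zero] at hABneg; linarith
        · exact h
      obtain ⟨K, hK1, hK2⟩ := ((hZt.eventually_lt_atBot 0).and (eventually_ge_atTop n)).exists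
      exact absurd hK1 (not_lt.mpr (hsignZpos hBpos K hK2).le)
    · obtain ⟨M, hM1, hM2⟩ := ((hY.eventually_lt_atBot 0).and (eventually_ge_atTop n)).exists
      exact absurd hM1 (not_lt.mpr (hsignYpos hApos M hM2).le)
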